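/- arXiv:1506.06191 — 2 statements merged into one kernel-verified Lean document; each statement's English description precedes it below -/
import Mathlib

section
/- Let R be a commutative Noetherian integrally closed domain, F a finitely generated torsion-free R-module, and F' ⊆ F a reflexive submodule. Then either the quotient F/F' is torsion-free, or every associated prime of the torsion submodule of F/F' has height 1. -/
open IsLocalRing
open scoped nonZeroDivisors

lemma local_key {A : Type*} [CommRing A] [IsDomain A] [IsNoetherianRing A]
    [IsIntegrallyClosed A] [IsLocalRing A]
    (K : Type*) [Field K] [Algebra A K] [IsFractionRing A K]
    (q1 : Ideal A) (hq1 : q1.IsPrime) (h0 : q1 ≠ ⊥) (hlt : q1 < maximalIdeal A)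
    (t : K) (ht : ∀ z ∈ maximalIdeal A, t * algebraMap A K z ∈ (algebraMap A K).range) :
    t ∈ (algebraMap A K).range := by
  have hinj := FaithfulSMul.algebraMap_injective A K
  by_cases hcase : ∀ z ∈ maximalIdeal A, ∃ w ∈ maximalIdeal A,
      t * algebraMap A K z = algebraMap A K w
  · -- determinant trick: t is integral over A
    have hint : IsIntegral A t := by
      refine isIntegral_of_smul_mem_submodule
        (Submodule.map (Algebra.linearMap A K) (maximalIdeal A)) ?_ ?_ t ?_
      · intro hbot
        have hm : maximalIdeal A ≠ ⊥ := fun h => h0 (le_bot_iff.mp (h ▸ hlt.le))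
        apply hm
        rw [eq_bot_iff]
        intro z hz
        have : Algebra.linearMap A K z ∈
            Submodule.map (Algebra.linearMap A K) (maximalIdeal A) :=
          Submodule.mem_map_of_mem hz
        rw [hbot, Submodule.mem_bot] at this
        simpa using hinj (by simpa using this : algebraMap A K z = algebraMap A K 0)
      · exact Submodule.FG.map _ (IsNoetherian.noetherian _)
      · rintro n ⟨z, hz, rfl⟩
        obtain ⟨w, hw, hw'⟩ := hcase z hz
        exact ⟨w, hw, by simpa [smul_eq_mul] using hw'.symm⟩
    obtain ⟨a, ha⟩ := IsIntegrallyClosed.isIntegral_iff.mp hint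
    exact ⟨a, ha⟩
  · push_neg at hcase
    obtain ⟨s, hs, hsw⟩ := hcase
    obtain ⟨b, hb⟩ := ht s hs
    have hbu : IsUnit b := by
      by_contra hbu
      exact hsw b hbu hb.symm
    -- maximalIdeal ≤ span {s}
    have hspan : maximalIdeal A ≤ Ideal.span {s} := by
      intro a ha
      obtain ⟨c, hc⟩ := ht a ha
      have : algebraMap A K (a * b) = algebraMap A K (s * c) := by
        rw [map_mul, map_mul, hb, hc]; ring
      have hab : a * b = s * c := hinj this
      refine Ideal.mem_span_singleton.mpr ⟨c * ↑hbu.unit⁻¹, ?_⟩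
      have hb1 : b * (↑hbu.unit⁻¹ : A) = 1 := hbu.mul_val_inv
      linear_combination (↑hbu.unit⁻¹ : A) * hab - a * hb1
    have hs1 : s ∉ q1 := by
      intro h
      exact absurd (hspan.trans ((Ideal.span_singleton_le_iff_mem q1).mpr h))
        (not_le_of_gt hlt)
    -- every element of q1 lies in all powers of span {s}
    exfalso
    obtain ⟨y, hy, hy0⟩ := Submodule.ne_bot_iff _ |>.mp h0
    have key : ∀ n : ℕ, ∃ c ∈ q1, y = s ^ n * c := by
      intro n
      induction n with
      | zero => exact ⟨y, hy, by simp⟩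
      | succ n ih =>
        obtain ⟨c, hc, hc'⟩ := ih
        obtain ⟨c', hc'eq⟩ := Ideal.mem_span_singleton.mp (hspan (hlt.le hc))
        have hc1 : c' ∈ q1 := by
          rcases hq1.mem_or_mem (hc'eq ▸ hc) with h | h
          · exact absurd h hs1
          · exact h
        exact ⟨c', hc1, by rw [hc', hc'eq, pow_succ]; ring⟩
    have hmem : y ∈ (⊥ : Ideal A) := by
      rw [← Ideal.iInf_pow_eq_bot_of_isDomain
        (I := Ideal.span {s}) (by
          simp only [Ne, Ideal.span_singleton_eq_top]
          exact fun h => (mem_nonunits_iff.mp ((IsLocalRing.mem_maximalIdeal _).mp hs)) h)]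
      rw [Submodule.mem_iInf]
      intro n
      obtain ⟨c, _, hc⟩ := key n
      rw [Ideal.span_singleton_pow]
      exact Ideal.mem_span_singleton.mpr ⟨c, hc⟩
    exact hy0 (by simpa using hmem)

lemma global_key {R : Type*} [CommRing R] [IsDomain R] [IsNoetherianRing R]
    [IsIntegrallyClosed R]
    (K : Type*) [Field K] [Algebra R K] [IsFractionRing R K]
    (p q1 : Ideal R) (hp : p.IsPrime) (hq1 : q1.IsPrime) (h0 : q1 ≠ ⊥) (hlt : q1 < p)
    (t : K) (ht : ∀ s ∈ p, t * algebraMap R K s ∈ (algebraMap R K).range) :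
    t ∈ (algebraMap R K).range := by
  have hinj := FaithfulSMul.algebraMap_injective R K
  obtain ⟨⟨a, d⟩, hd⟩ := IsLocalization.surj (nonZeroDivisors R) (S := K) t
  simp only at hd
  have hd0 : (d : R) ≠ 0 := nonZeroDivisors.ne_zero d.2
  have hdK : algebraMap R K d ≠ 0 := fun h => hd0 (hinj (by simpa using h))
  -- it suffices that a ∈ (d)
  suffices hsuff : a ∈ Ideal.span {(d : R)} by
    obtain ⟨c, hc⟩ := Ideal.mem_span_singleton.mp hsuff
    refine ⟨c, ?_⟩
    have : algebraMap R K c * algebraMap R K d = t * algebraMap R K d := by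
      rw [hd, hc, map_mul]; ring
    exact (mul_right_cancel₀ hdK this)
  by_contra hnot
  -- find an associated prime q of R/(d) containing ann(a) ⊇ p
  set M := R ⧸ Ideal.span {(d : R)} with hM
  have hane : (Ideal.Quotient.mk (Ideal.span {(d : R)}) a) ≠ 0 := by
    intro h
    exact hnot (by rwa [Ideal.Quotient.eq_zero_iff_mem] at h)
  obtain ⟨q, hq, hle⟩ := exists_le_isAssociatedPrime_of_isNoetherianRing R _ hane
  obtain ⟨hqp, x, hx⟩ := isAssociatedPrime_iff.mp hq
  obtain ⟨b, rfl⟩ := Ideal.Quotient.mk_surjective x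
  -- membership criterion for q
  have hqmem : ∀ r : R, r ∈ q ↔ r * b ∈ Ideal.span {(d : R)} := by
    intro r
    rw [hx, Submodule.mem_colon_singleton, Submodule.mem_bot]
    have hsm : r • Ideal.Quotient.mk (Ideal.span {(d : R)}) b
        = Ideal.Quotient.mk (Ideal.span {(d : R)}) (r * b) := rfl
    rw [hsm, Ideal.Quotient.eq_zero_iff_mem]
  have hbnot : b ∉ Ideal.span {(d : R)} := by
    intro h
    apply hqp.ne_top
    rw [Ideal.eq_top_iff_one, hqmem]
    simpa using h
  -- p ≤ q
  have hpq : p ≤ q := by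
    refine le_trans ?_ hle
    intro s hsp
    rw [Submodule.mem_colon_singleton, Submodule.mem_bot]
    have hsm : s • Ideal.Quotient.mk (Ideal.span {(d : R)}) a
        = Ideal.Quotient.mk (Ideal.span {(d : R)}) (s * a) := rfl
    rw [hsm, Ideal.Quotient.eq_zero_iff_mem]
    obtain ⟨w, hw⟩ := ht s hsp
    have : algebraMap R K (s * a) = algebraMap R K ((d : R) * w) := by
      rw [map_mul, map_mul, ← hd, hw]; ring
    rw [Ideal.mem_span_singleton]
    exact ⟨w, hinj this⟩
  -- localize at q
  have hcompl : q.primeCompl ≤ R⁰ := fun s hs =>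
    mem_nonZeroDivisors_of_ne_zero (fun h => hs (h ▸ q.zero_mem))
  set B := Localization.subalgebra K q.primeCompl hcompl with hB
  haveI : IsLocalization.AtPrime B q := Localization.subalgebra.isLocalization_subalgebra K _ hcompl
  haveI : IsNoetherianRing B := IsLocalization.isNoetherianRing q.primeCompl B ‹_›
  haveI : IsLocalRing B := IsLocalization.AtPrime.isLocalRing B q
  haveI : IsIntegrallyClosed B := isIntegrallyClosed_of_isLocalization B q.primeCompl hcompl
  haveI : IsFractionRing B K := Localization.subalgebra.isFractionRing K _ hcompl
  have hinjB := FaithfulSMul.algebraMap_injective B K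
  have halg : ∀ r : R, algebraMap B K (algebraMap R B r) = algebraMap R K r := by
    intro r
    rw [← IsScalarTower.algebraMap_apply]
  -- the element t' = b / d
  set t' : K := algebraMap R K b / algebraMap R K d with ht'
  have ht'd : t' * algebraMap R K d = algebraMap R K b := div_mul_cancel₀ _ hdK
  -- q1 gives a small prime in B
  have hq1q : q1 ≤ q := le_trans hlt.le hpq
  have hdisj : Disjoint (q.primeCompl : Set R) (q1 : Set R) := by
    rw [Set.disjoint_iff]
    rintro r ⟨h1, h2⟩
    exact h1 (hq1q h2)
  have hQ1prime : (Ideal.map (algebraMap R B) q1).IsPrime :=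
    IsLocalization.isPrime_of_isPrime_disjoint q.primeCompl B q1 hq1 hdisj
  have hQ1ne : Ideal.map (algebraMap R B) q1 ≠ ⊥ := by
    obtain ⟨y, hy, hy0⟩ := Submodule.ne_bot_iff _ |>.mp h0
    intro h
    have : algebraMap R B y ∈ Ideal.map (algebraMap R B) q1 := Ideal.mem_map_of_mem _ hy
    rw [h, Submodule.mem_bot] at this
    have : algebraMap R K y = 0 := by rw [← halg, this, map_zero]
    exact hy0 (hinj (by simpa using this))
  have hmax : Ideal.map (algebraMap R B) q = IsLocalRing.maximalIdeal B := by
    conv_lhs => rw [← IsLocalization.AtPrime.comap_maximalIdeal B q]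
    exact IsLocalization.map_comap q.primeCompl B _
  have hQ1lt : Ideal.map (algebraMap R B) q1 < IsLocalRing.maximalIdeal B := by
    rw [← hmax]
    refine lt_of_le_of_ne (Ideal.map_mono hq1q) ?_
    intro h
    have h1 := IsLocalization.comap_map_of_isPrime_disjoint q.primeCompl B hq1 hdisj
    have h2 := IsLocalization.comap_map_of_isPrime_disjoint q.primeCompl B hqp
      (by rw [Set.disjoint_iff]; rintro r ⟨a1, a2⟩; exact a1 a2)
    rw [h] at h1
    rw [h1] at h2
    exact (ne_of_lt (lt_of_lt_of_le hlt hpq)) h2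
  -- hypothesis of local_key for t'
  have htm : ∀ z ∈ IsLocalRing.maximalIdeal B, t' * algebraMap B K z ∈ (algebraMap B K).range := by
    rw [← hmax]
    have hsub : Ideal.map (algebraMap R B) q ≤ Submodule.comap
        ((t' • Algebra.linearMap B K).restrictScalars B)
        (LinearMap.range ((Algebra.linearMap B K).restrictScalars B)) := by
      rw [Ideal.map_le_iff_le_comap]
      intro r hr
      obtain ⟨w, hw⟩ := Ideal.mem_span_singleton.mp ((hqmem r).mp hr)
      rw [Ideal.mem_comap, Submodule.mem_comap, LinearMap.mem_range]
      refine ⟨algebraMap R B w, ?_⟩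
      rw [LinearMap.restrictScalars_apply, LinearMap.restrictScalars_apply, LinearMap.smul_apply,
        Algebra.linearMap_apply, Algebra.linearMap_apply, halg, halg, smul_eq_mul, ht',
        div_mul_eq_mul_div, eq_div_iff hdK, ← map_mul, ← map_mul]
      exact congrArg _ (by linear_combination -hw)
    intro z hz
    obtain ⟨w, hw⟩ := LinearMap.mem_range.mp (Submodule.mem_comap.mp (hsub hz))
    refine ⟨w, ?_⟩
    rw [LinearMap.restrictScalars_apply, Algebra.linearMap_apply] at hw
    rw [hw, LinearMap.restrictScalars_apply, LinearMap.smul_apply, Algebra.linearMap_apply,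
      smul_eq_mul]
  have := local_key K _ hQ1prime hQ1ne hQ1lt t' htm
  obtain ⟨z, hz⟩ := this
  obtain ⟨⟨c, s⟩, hcs⟩ := IsLocalization.surj q.primeCompl (S := B) z
  simp only at hcs
  -- contradiction: s ∈ q.primeCompl but s ∈ q
  refine absurd ((hqmem s).mpr ?_) s.2
  have h3 : t' * algebraMap R K s = algebraMap R K c := by
    have h4 := congrArg (algebraMap B K) hcs
    rw [map_mul, halg, halg, hz] at h4
    exact h4
  have h5 : algebraMap R K ((s : R) * b) = algebraMap R K ((d : R) * c) := by
    rw [map_mul, map_mul, ← h3, ht']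
    field_simp
  rw [Ideal.mem_span_singleton]
  exact ⟨c, hinj h5⟩

/-- **Lemma 3.1(2), affine form.**  Let `R` be a commutative Noetherian
integrally closed domain, `F` a finitely generated torsion-free `R`-module and
`F' ⊆ F` a reflexive submodule.  Then either the quotient `F ⧸ F'` is torsion
free, or every associated prime of the torsion submodule of `F ⧸ F'` has
height `1`. -/
theorem torsion_of_quotient_by_reflexive_pure_of_codim_one
    {R : Type*} [CommRing R] [IsDomain R] [IsNoetherianRing R]
    [IsIntegrallyClosed R]
    {F : Type*} [AddCommGroup F] [Module R F] [Module.Finite R F]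
    (hF : Submodule.torsion R F = ⊥)
    (F' : Submodule R F) (hF' : Module.IsReflexive R F') :
    Submodule.torsion R (F ⧸ F') = ⊥ ∨
      ∀ p (hp : p ∈ associatedPrimes R (Submodule.torsion R (F ⧸ F'))),
        Order.height (⟨p, hp.isPrime⟩ : PrimeSpectrum R) = 1 := by
  haveI := hF'
  by_cases htor : Submodule.torsion R (F ⧸ F') = ⊥
  · exact Or.inl htor
  right
  intro p hp
  obtain ⟨hprime, xt, hxt⟩ := isAssociatedPrime_iff.mp hp
  obtain ⟨x, hxq⟩ := Submodule.Quotient.mk_surjective F' (xt : F ⧸ F')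
  -- membership criterion for p
  have hpmem : ∀ r : R, r ∈ p ↔ r • x ∈ F' := by
    intro r
    rw [hxt, Submodule.mem_colon_singleton, Submodule.mem_bot]
    constructor
    · intro h
      have h1 : (↑(r • xt) : F ⧸ F') = 0 := by rw [h]; rfl
      have h2 : (↑(r • xt) : F ⧸ F') = Submodule.Quotient.mk (r • x) := by
        rw [Submodule.coe_smul, ← hxq, ← Submodule.Quotient.mk_smul]
      rw [h2] at h1
      exact (Submodule.Quotient.mk_eq_zero F').mp h1
    · intro h
      have h1 : (↑(r • xt) : F ⧸ F') = 0 := by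
        rw [Submodule.coe_smul, ← hxq, ← Submodule.Quotient.mk_smul]
        exact (Submodule.Quotient.mk_eq_zero F').mpr h
      exact Subtype.ext h1
  -- torsion witness
  obtain ⟨s₀, hs₀⟩ := xt.2
  have hs0 : (s₀ : R) ≠ 0 := nonZeroDivisors.ne_zero s₀.2
  have hs0p : (s₀ : R) ∈ p := by
    rw [hpmem]
    have h1 : (s₀ : R) • (xt : F ⧸ F') = 0 := by
      rw [← Submonoid.smul_def]; exact hs₀
    rw [← hxq, ← Submodule.Quotient.mk_smul] at h1
    exact (Submodule.Quotient.mk_eq_zero F').mp h1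
  -- x ∉ F'
  have hxF' : x ∉ F' := by
    intro h
    have h1 : xt = 0 := by
      apply Subtype.ext
      rw [← hxq]
      exact (Submodule.Quotient.mk_eq_zero F').mpr h
    apply hprime.ne_top
    rw [hxt, h1, Ideal.eq_top_iff_one, Submodule.mem_colon_singleton, Submodule.mem_bot, one_smul]
  -- height ≥ 1
  have hge : 1 ≤ Order.height (⟨p, hprime⟩ : PrimeSpectrum R) := by
    rw [ENat.one_le_iff_ne_zero]
    intro h
    have hmin : IsMin (⟨p, hprime⟩ : PrimeSpectrum R) := Order.height_eq_zero.mp h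
    have hbot : (⟨⊥, Ideal.bot_prime⟩ : PrimeSpectrum R) ≤ ⟨p, hprime⟩ := bot_le
    have := hmin hbot
    exact hs0 (Submodule.mem_bot R |>.mp (this hs0p))
  -- height ≤ 1
  have hle : Order.height (⟨p, hprime⟩ : PrimeSpectrum R) ≤ 1 := by
    by_contra hgt
    rw [not_le] at hgt
    have h2 : ((2 : ℕ) : ℕ∞) ≤ Order.height (⟨p, hprime⟩ : PrimeSpectrum R) := by
      have h3 := (ENat.add_one_le_iff (show (1:ℕ∞) ≠ ⊤ by simp)).mpr hgt
      calc ((2 : ℕ) : ℕ∞) = 1 + 1 := by norm_num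
        _ ≤ _ := h3
    obtain ⟨ser, hlast, hlen⟩ := Order.exists_series_of_le_height _ h2
    have h01 : ser ⟨0, by omega⟩ < ser ⟨1, by omega⟩ :=
      ser.strictMono (Fin.mk_lt_mk.mpr (by omega))
    have h12 : ser ⟨1, by omega⟩ < ser ⟨2, by omega⟩ :=
      ser.strictMono (Fin.mk_lt_mk.mpr (by omega))
    have hl2 : ser ⟨2, by omega⟩ = (⟨p, hprime⟩ : PrimeSpectrum R) := by
      rw [← hlast, RelSeries.last]
      congr 1
      ext
      simp [hlen]
    rw [hl2] at h12
    set q1 : Ideal R := (ser ⟨1, by omega⟩).asIdeal with hq1def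
    have hq1p : q1.IsPrime := (ser ⟨1, by omega⟩).2
    have hq1ne : q1 ≠ ⊥ := by
      intro h
      have h4 : (ser ⟨0, by omega⟩).asIdeal < q1 := h01
      rw [h] at h4
      exact not_lt_bot h4
    have hq1lt : q1 < p := h12
    -- the contradiction machinery

    set N : Submodule R F := F' ⊔ Submodule.span R {x} with hN
    have hF'N : F' ≤ N := le_sup_left
    have hxN : x ∈ N := Submodule.mem_sup_right (Submodule.mem_span_singleton_self x)
    set incl : F' →ₗ[R] N := Submodule.inclusion hF'N with hincl
    set res : Module.Dual R N →ₗ[R] Module.Dual R F' := incl.dualMap with hres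
    have hs0x : (s₀ : R) • x ∈ F' := (hpmem _).mp hs0p
    -- injectivity of restriction
    have hresinj : Function.Injective res := by
      rw [injective_iff_map_eq_zero]
      intro g hg
      ext n
      obtain ⟨y, hy, z, hz, hyz⟩ := Submodule.mem_sup.mp n.2
      obtain ⟨r, rfl⟩ := Submodule.mem_span_singleton.mp hz
      have hmem : (s₀ : R) • (n : F) ∈ F' := by
        rw [← hyz, smul_add]
        refine F'.add_mem (F'.smul_mem _ hy) ?_
        rw [smul_comm]
        exact F'.smul_mem _ hs0x
      have heq : (s₀ : R) • n = incl ⟨(s₀ : R) • (n : F), hmem⟩ := by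
        apply Subtype.ext
        simp [hincl]
      have h5 : (s₀ : R) * g n = 0 := by
        have h6 : g ((s₀ : R) • n) = 0 := by
          rw [heq]
          have h7 := congrFun (congrArg DFunLike.coe hg) (⟨(s₀ : R) • ↑n, hmem⟩ : F')
          simpa [hres, LinearMap.dualMap_apply] using h7
        rw [map_smul, smul_eq_mul] at h6
        exact h6
      rcases mul_eq_zero.mp h5 with h | h
      · exact absurd h hs0
      · simpa using h
    -- surjectivity of restriction
    have hressurj : Function.Surjective res := by
      intro f
      have hKinj := FaithfulSMul.algebraMap_injective R (FractionRing R)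
      have hs0K : algebraMap R (FractionRing R) (s₀ : R) ≠ 0 := fun h =>
        hs0 (hKinj (by simpa using h))
      set t : FractionRing R := algebraMap R (FractionRing R) (f ⟨(s₀ : R) • x, hs0x⟩) /
        algebraMap R (FractionRing R) (s₀ : R) with htdef
      have hcross : ∀ s (hs : s ∈ p),
          (s₀ : R) * f ⟨s • x, (hpmem s).mp hs⟩ = s * f ⟨(s₀ : R) • x, hs0x⟩ := by
        intro s hs
        have h7 : (s₀ : R) • (⟨s • x, (hpmem s).mp hs⟩ : F')
            = s • (⟨(s₀ : R) • x, hs0x⟩ : F') := by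
          apply Subtype.ext
          simp [smul_smul, mul_comm]
        have h8 := congrArg f h7
        rw [map_smul, map_smul, smul_eq_mul, smul_eq_mul] at h8
        exact h8
      have hmain : ∀ s (hs : s ∈ p), algebraMap R (FractionRing R) (f ⟨s • x, (hpmem s).mp hs⟩)
          = t * algebraMap R (FractionRing R) s := by
        intro s hs
        rw [htdef, div_mul_eq_mul_div, eq_div_iff hs0K, ← map_mul, ← map_mul]
        exact congrArg _ (by linear_combination hcross s hs)
      have htp : ∀ s ∈ p, t * algebraMap R (FractionRing R) s
          ∈ (algebraMap R (FractionRing R)).range := by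
        intro s hs
        exact ⟨f ⟨s • x, (hpmem s).mp hs⟩, hmain s hs⟩
      obtain ⟨a, ha⟩ := global_key (FractionRing R) p q1 hprime hq1p hq1ne hq1lt t htp
      have hfa : ∀ s (hs : s ∈ p), f ⟨s • x, (hpmem s).mp hs⟩ = s * a := by
        intro s hs
        apply hKinj
        rw [hmain s hs, ← ha, ← map_mul, mul_comm]
      set X : N := ⟨x, hxN⟩ with hX
      set π : (F' × R) →ₗ[R] N := (incl.comp (LinearMap.fst R F' R)) +
        ((LinearMap.toSpanSingleton R N X).comp (LinearMap.snd R F' R)) with hπ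
      have hπapp : ∀ (y : F') (r : R), ((π (y, r) : N) : F) = (y : F) + r • x := by
        intro y r
        simp [hπ, hincl, hX, LinearMap.toSpanSingleton_apply]
      have hπsurj : Function.Surjective π := by
        rintro ⟨n, hn⟩
        obtain ⟨y, hy, z, hz, hyz⟩ := Submodule.mem_sup.mp hn
        obtain ⟨r, rfl⟩ := Submodule.mem_span_singleton.mp hz
        exact ⟨(⟨y, hy⟩, r), Subtype.ext (by rw [hπapp]; exact hyz)⟩
      set h : (F' × R) →ₗ[R] R := (f.comp (LinearMap.fst R F' R)) +
        a • (LinearMap.snd R F' R) with hh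
      have happ : ∀ (y : F') (r : R), h (y, r) = f y + a * r := by
        intro y r
        simp [hh, smul_eq_mul]
      have hker : LinearMap.ker π ≤ LinearMap.ker h := by
        rintro ⟨y, r⟩ hz
        rw [LinearMap.mem_ker] at hz ⊢
        have h9 : (y : F) + r • x = 0 := by
          rw [← hπapp y r, hz]
          rfl
        have hrx : r • x = -(y : F) := by
          rw [← neg_eq_of_add_eq_zero_right h9]
        have hrp : r ∈ p := (hpmem r).mpr (hrx ▸ F'.neg_mem y.2)
        have hy : y = -(⟨r • x, (hpmem r).mp hrp⟩ : F') := by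
          apply Subtype.ext
          rw [← neg_eq_of_add_eq_zero_left h9]
          rfl
        rw [happ, hy, map_neg, hfa r hrp]
        ring
      set g : Module.Dual R N := ((LinearMap.ker π).liftQ h hker).comp
        (π.quotKerEquivOfSurjective hπsurj).symm.toLinearMap with hg
      have hcomp : ∀ z, g (π z) = h z := by
        intro z
        have h10 : (π.quotKerEquivOfSurjective hπsurj) (Submodule.Quotient.mk z) = π z := by
          rfl
        have h11 : (π.quotKerEquivOfSurjective hπsurj).symm (π z) = Submodule.Quotient.mk z := by
          rw [← h10, LinearEquiv.symm_apply_apply]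
        rw [hg]
        simp only [LinearMap.comp_apply, LinearEquiv.coe_toLinearMap, h11]
        exact Submodule.liftQ_apply _ _ _
      refine ⟨g, ?_⟩
      ext y
      have h12 : incl y = π (y, 0) := by
        apply Subtype.ext
        rw [hπapp]
        simp [hincl]
      rw [hres, LinearMap.dualMap_apply, h12, hcomp, happ]
      simp
    -- the retraction
    set e : Module.Dual R N ≃ₗ[R] Module.Dual R F' :=
      LinearEquiv.ofBijective res ⟨hresinj, hressurj⟩ with he
    set φ : N →ₗ[R] Module.Dual R (Module.Dual R F') :=
      (e.symm.toLinearMap.dualMap).comp (Module.Dual.eval R N) with hφ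
    have hφapp : ∀ (n : N) (f : Module.Dual R F'), φ n f = (e.symm f) n := by
      intro n f
      rfl
    set retr : N →ₗ[R] F' := ((Module.evalEquiv R F').symm.toLinearMap).comp φ with hretr
    have hretrid : ∀ y : F', retr (incl y) = y := by
      intro y
      have h13 : φ (incl y) = Module.Dual.eval R F' y := by
        ext f
        rw [hφapp]
        have h14 : res (e.symm f) = f := by
          have := e.apply_symm_apply f
          exact this
        calc (e.symm f) (incl y) = (res (e.symm f)) y := by rw [hres]; rfl
          _ = f y := by rw [h14]
          _ = (Module.Dual.eval R F' y) f := rfl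
      rw [hretr]
      simp only [LinearMap.comp_apply, LinearEquiv.coe_toLinearMap, h13]
      rw [← Module.evalEquiv_toLinearMap]
      exact (Module.evalEquiv R F').symm_apply_apply y
    -- finish
    set X : N := ⟨x, hxN⟩ with hX
    set z : N := X - incl (retr X) with hz
    have hrz : retr z = 0 := by
      rw [hz, map_sub, hretrid]
      exact sub_self _
    have hs0X : (s₀ : R) • X = incl ⟨(s₀ : R) • x, hs0x⟩ := by
      apply Subtype.ext
      simp [hincl, hX]
    have hs0z : (s₀ : R) • z = incl (⟨(s₀ : R) • x, hs0x⟩ - (s₀ : R) • retr X) := by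
      rw [hz, smul_sub, hs0X, map_sub, map_smul]
    have hw0 : (⟨(s₀ : R) • x, hs0x⟩ - (s₀ : R) • retr X : F') = 0 := by
      have h15 : retr ((s₀ : R) • z) = 0 := by rw [map_smul, hrz, smul_zero]
      rw [hs0z, hretrid] at h15
      exact h15
    have hz0 : (s₀ : R) • z = 0 := by
      rw [hs0z, hw0, map_zero]
    have hzF : (z : F) ∈ Submodule.torsion R F := by
      rw [Submodule.mem_torsion_iff]
      refine ⟨s₀, ?_⟩
      have := congrArg (Subtype.val) hz0
      simpa [Submonoid.smul_def] using this
    rw [hF, Submodule.mem_bot] at hzF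
    apply hxF'
    have h16 : (X : F) = ((incl (retr X) : N) : F) := by
      have h18 : z = 0 := Subtype.ext hzF
      rw [hz, sub_eq_zero] at h18
      exact congrArg Subtype.val h18
    have h17 : ((incl (retr X) : N) : F) = ((retr X : F') : F) := by simp [hincl]
    rw [h17] at h16
    rw [show x = (X : F) from rfl, h16]
    exact (retr X).2
  exact le_antisymm hle hge
end

section
/- Let G be a group acting on topological spaces X and Ω, and let P : X → Ω be a G-equivariant open map. Let W ⊆ X be a nonempty open G-invariant subset. Assume that for every pair of points x, x' ∈ X with P(x) = P(x') there exists g ∈ G such that g • P(x) = P(x) and g • x = x'. If x₀ ∈ X is a point such that the G-orbit of P(x₀) is dense in Ω, then x₀ ∈ W. -/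
/-- **Abstract form of Lemma 2.1.**  Let `P : X → Ω` be a `G`-equivariant open
map between topological `G`-spaces such that the stabilizer of `P x` acts
transitively on the fiber of `P` through `x`, for every `x`.  If `W ⊆ X` is a
nonempty open `G`-invariant subset and `x₀` is a point such that the `G`-orbit
of `P x₀` is dense in `Ω`, then `x₀ ∈ W`. -/
theorem mem_invariant_open_of_dense_orbit_of_period_map
    {G X Ω : Type*} [Group G] [MulAction G X] [MulAction G Ω]
    [TopologicalSpace X] [TopologicalSpace Ω]
    (P : X → Ω) (hPequiv : ∀ (g : G) (x : X), P (g • x) = g • P x)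
    (hPopen : IsOpenMap P)
    (W : Set X) (hWopen : IsOpen W) (hWne : W.Nonempty)
    (hWinv : ∀ (g : G), ∀ w ∈ W, g • w ∈ W)
    (htrans : ∀ x x' : X, P x = P x' →
      ∃ g : G, g • P x = P x ∧ g • x = x')
    (x₀ : X) (hx₀ : Dense (MulAction.orbit G (P x₀) : Set Ω)) :
    x₀ ∈ W := by
  have hPW : IsOpen (P '' W) := hPopen W hWopen
  have hPWne : (P '' W).Nonempty := hWne.image P
  obtain ⟨ω, hω1, hω2⟩ := hx₀.inter_open_nonempty _ hPW hPWne
  obtain ⟨w, hwW, hwP⟩ := hω1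
  obtain ⟨g, hg⟩ := hω2
  have hPeq : P (g • x₀) = P w := by
    rw [hPequiv, hwP]; exact hg
  obtain ⟨h, _, hhx⟩ := htrans (g • x₀) w hPeq
  have hkey : (h * g) • x₀ = w := by rw [mul_smul, hhx]
  have hx₀w : x₀ = (h * g)⁻¹ • w := by rw [← hkey, inv_smul_smul]
  rw [hx₀w]
  exact hWinv _ _ hwW
end
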